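/- (Core of Theorem 2, active groups) Let m ≥ 1, π₀ ∈ (0,1), σ > 0, let (τ_n²) be positive reals with √n·τ_n² → ∞ and log(τ_n²)/n → 0, and let (x_n) be a sequence in ℝ^m with x_n → x for some x ≠ 0. Define B_n = 1/(1 + n·τ_n²) and l_n = π₀ / (π₀ + (1−π₀)·(1 + n·τ_n²)^{−m/2}·exp((1−B_n)·n·‖x_n‖₂²/(2σ²))). Then l_n → 0 as n → ∞. -/

import Mathlib

open Filter

/-- **Core of Theorem 2, active groups.**  With `B_n = 1/(1 + n τ_n²)` and
`l_n = π₀ / (π₀ + (1-π₀) (1 + n τ_n²)^{-m/2} exp((1-B_n) n ‖x_n‖₂²/(2σ²)))`,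
if `√n τ_n² → ∞`, `log(τ_n²)/n → 0`, and `x_n → x ≠ 0` in `ℝ^m`, then the
posterior spike probability `l_n → 0`. -/
theorem bgl_ss_posterior_spike_prob_tendsto_zero (m : ℕ) (hm : 1 ≤ m)
    (π₀ : ℝ) (hπ₀ : 0 < π₀) (hπ₁ : π₀ < 1) (σ : ℝ) (hσ : 0 < σ)
    (τ2 : ℕ → ℝ) (hτ2 : ∀ n, 0 < τ2 n)
    (hτlim : Tendsto (fun n : ℕ => Real.sqrt (n : ℝ) * τ2 n) atTop atTop)
    (hτlog : Tendsto (fun n : ℕ => Real.log (τ2 n) / (n : ℝ)) atTop (nhds 0))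
    (x : ℕ → EuclideanSpace ℝ (Fin m)) (xlim : EuclideanSpace ℝ (Fin m))
    (hxlim : xlim ≠ 0) (hx : Tendsto x atTop (nhds xlim))
    (B l : ℕ → ℝ)
    (hB : ∀ n : ℕ, B n = 1 / (1 + (n : ℝ) * τ2 n))
    (hl : ∀ n : ℕ, l n = π₀ /
      (π₀ + (1 - π₀) * (1 + (n : ℝ) * τ2 n) ^ (-(m : ℝ) / 2) *
        Real.exp ((1 - B n) * (n : ℝ) * ‖x n‖ ^ 2 / (2 * σ ^ 2)))) :
    Tendsto l atTop (nhds 0) := by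
  set T : ℕ → ℝ := fun n => (n : ℝ) * τ2 n with hT
  -- T n → ∞
  have hTlim : Tendsto T atTop atTop := by
    apply tendsto_atTop_mono' atTop ?_ hτlim
    filter_upwards [eventually_ge_atTop 1] with n hn
    have h1 : (1 : ℝ) ≤ Real.sqrt n := by
      rw [show (1:ℝ) = Real.sqrt 1 from (Real.sqrt_one).symm]
      exact Real.sqrt_le_sqrt (by exact_mod_cast hn)
    have : Real.sqrt n * τ2 n ≤ Real.sqrt n * (Real.sqrt n * τ2 n) :=
      le_mul_of_one_le_left (mul_nonneg (Real.sqrt_nonneg _) (hτ2 n).le) h1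
    calc Real.sqrt n * τ2 n ≤ Real.sqrt n * Real.sqrt n * τ2 n := by linarith [this]
      _ = T n := by rw [Real.mul_self_sqrt (Nat.cast_nonneg n)]
  have hT0 : ∀ n, 0 ≤ T n := fun n => mul_nonneg (Nat.cast_nonneg n) (hτ2 n).le
  have h1T : ∀ n, (0:ℝ) < 1 + T n := fun n => by linarith [hT0 n]
  -- B → 0
  have h1Tlim : Tendsto (fun n => 1 + T n) atTop atTop :=
    tendsto_atTop_add_const_left _ 1 hTlim
  have hBlim : Tendsto B atTop (nhds 0) := by
    have h := (tendsto_inv_atTop_zero).comp h1Tlim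
    apply h.congr
    intro n; simp [hB n, one_div, hT]
  -- log(1+T n)/n → 0
  have hlogn : Tendsto (fun n : ℕ => Real.log n / n) atTop (nhds 0) :=
    (Real.isLittleO_log_id_atTop.tendsto_div_nhds_zero).comp tendsto_natCast_atTop_atTop
  have hlog2 : Tendsto (fun n : ℕ => Real.log 2 / n) atTop (nhds 0) :=
    tendsto_const_div_atTop_nhds_zero_nat _
  have hupper : Tendsto (fun n : ℕ => Real.log 2 / n + Real.log n / n + Real.log (τ2 n) / n)
      atTop (nhds 0) := by
    have := (hlog2.add hlogn).add hτlog
    simpa using this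
  have hlogT : Tendsto (fun n : ℕ => Real.log (1 + T n) / n) atTop (nhds 0) := by
    apply tendsto_of_tendsto_of_tendsto_of_le_of_le' tendsto_const_nhds hupper
    · filter_upwards [eventually_ge_atTop 1] with n hn
      have hn' : (0:ℝ) < n := by exact_mod_cast hn
      have : (0:ℝ) ≤ Real.log (1 + T n) := Real.log_nonneg (by linarith [hT0 n])
      positivity
    · filter_upwards [h1Tlim.eventually_ge_atTop 2, eventually_ge_atTop 1] with n h2 hn
      have hn' : (0:ℝ) < n := by exact_mod_cast hn
      have hTn1 : (1:ℝ) ≤ T n := by linarith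
      have hle : Real.log (1 + T n) ≤ Real.log (2 * T n) := by
        apply Real.log_le_log (h1T n); linarith
      have heq : Real.log (2 * T n) = Real.log 2 + Real.log n + Real.log (τ2 n) := by
        rw [Real.log_mul (by norm_num) (by linarith), hT,
          Real.log_mul (by positivity) (ne_of_gt (hτ2 n))]
        ring
      have hfin : Real.log (1 + T n) ≤ Real.log 2 + Real.log n + Real.log (τ2 n) := by
        rw [← heq]; exact hle
      calc Real.log (1 + T n) / n ≤ (Real.log 2 + Real.log n + Real.log (τ2 n)) / n := by
            gcongr
        _ = Real.log 2 / n + Real.log n / n + Real.log (τ2 n) / n := by ring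
  -- limit constant
  set C : ℝ := ‖xlim‖ ^ 2 / (2 * σ ^ 2) with hCdef
  have hC : 0 < C := by
    have : 0 < ‖xlim‖ := norm_pos_iff.mpr hxlim
    positivity
  -- g n → C
  set g : ℕ → ℝ := fun n => (1 - B n) * ‖x n‖ ^ 2 / (2 * σ ^ 2)
    - ((m : ℝ) / 2) * (Real.log (1 + T n) / n) with hg
  have hglim : Tendsto g atTop (nhds C) := by
    have hnorm : Tendsto (fun n => ‖x n‖ ^ 2) atTop (nhds (‖xlim‖ ^ 2)) :=
      (hx.norm).pow 2
    have h1 : Tendsto (fun n => (1 - B n) * ‖x n‖ ^ 2 / (2 * σ ^ 2)) atTop (nhds C) := by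
      have := (((tendsto_const_nhds (x := (1:ℝ)) (f := atTop (α := ℕ))).sub hBlim).mul
        hnorm).div_const (2 * σ ^ 2)
      simpa [hCdef] using this
    have h2 : Tendsto (fun n => ((m : ℝ) / 2) * (Real.log (1 + T n) / n)) atTop (nhds 0) := by
      simpa using hlogT.const_mul ((m : ℝ) / 2)
    simpa using h1.sub h2
  -- n * g n → ∞
  have hng : Tendsto (fun n : ℕ => (n : ℝ) * g n) atTop atTop :=
    tendsto_natCast_atTop_atTop.atTop_mul_pos hC hglim
  -- denominator → ∞
  have hD : Tendsto (fun n : ℕ => π₀ + (1 - π₀) * (1 + T n) ^ (-(m : ℝ) / 2) *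
      Real.exp ((1 - B n) * (n : ℝ) * ‖x n‖ ^ 2 / (2 * σ ^ 2))) atTop atTop := by
    apply tendsto_atTop_add_const_left
    have hexp : Tendsto (fun n : ℕ => (1 - π₀) * Real.exp ((n : ℝ) * g n)) atTop atTop :=
      (Real.tendsto_exp_atTop.comp hng).const_mul_atTop (by linarith)
    apply hexp.congr'
    filter_upwards [eventually_ge_atTop 1] with n hn
    have hn' : (n : ℝ) ≠ 0 := by positivity
    rw [Real.rpow_def_of_pos (h1T n), mul_assoc, ← Real.exp_add]
    congr 2
    simp only [hg]
    field_simp [hg]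
    ring
  -- conclude
  have := (tendsto_const_nhds (x := π₀) (f := atTop (α := ℕ))).div_atTop hD
  apply this.congr
  intro n
  exact (hl n).symm
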